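/- Let t0 ∈ (0,1)^m. Assume: (i) there is an open neighborhood N(t0) ⊆ (0,1)^m of t0 such that for every t ∈ N(t0) the φ-projection of t on M = S(cl(Θ)) exists, is unique, and equals S(θ) for a (necessarily unique) θ ∈ int(Θ), so that ϑ* maps N(t0) into int(Θ); and (ii) the k×k Hessian matrix H0 of the function θ ↦ D_φ(S(θ)∣t0) evaluated at ϑ*(t0) is positive definite. Then ϑ* is continuously differentiable on an open neighborhood of t0, and its k×m Jacobian matrix at t0 is J[ϑ*](t0) = H0⁻¹ · J[S](ϑ*(t0))ᵀ · Δ(t0), where Δ(t0) is the m×m diagonal matrix whose i-th diagonal entry is (S_i(ϑ*(t0))/t_{0,i}²)·φ''(S_i(ϑ*(t0))/t_{0,i}). -/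

import Mathlib

open Filter Topology Matrix
open Set

/-- For `t ∈ (0,1)^m` and `s ∈ [0,1]^m`, the (real-valued) `φ`-divergence
`D_φ(s∣t) = Σ_{i=1}^m t_i φ(s_i/t_i)`. -/
noncomputable def DphiR (φ : ℝ → ℝ) {m : ℕ} (s t : Fin m → ℝ) : ℝ :=
  ∑ i, t i * φ (s i / t i)

/-- `p` is a `φ`-projection of `t` on `M`: `p ∈ M` minimizes `D_φ(·∣t)` over `M`. -/
def IsPhiProjR (φ : ℝ → ℝ) {m : ℕ} (M : Set (Fin m → ℝ)) (t p : Fin m → ℝ) : Prop :=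
  p ∈ M ∧ ∀ s ∈ M, DphiR φ p t ≤ DphiR φ s t

/-- The Jacobian matrix of `F : ℝ^a → ℝ^b` at `x`. -/
noncomputable def jacMatrix {a b : ℕ} (F : (Fin a → ℝ) → (Fin b → ℝ))
    (x : Fin a → ℝ) : Matrix (Fin b) (Fin a) ℝ :=
  Matrix.of fun i j => fderiv ℝ (fun y => F y i) x (Pi.single j 1)

/-- The Hessian matrix of `h : ℝ^a → ℝ` at `x`. -/
noncomputable def hessMatrix {a : ℕ} (h : (Fin a → ℝ) → ℝ)
    (x : Fin a → ℝ) : Matrix (Fin a) (Fin a) ℝ :=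
  Matrix.of fun i j =>
    fderiv ℝ (fun y => fderiv ℝ h y (Pi.single j 1)) x (Pi.single i 1)



lemma phiContOnIci (φ : ℝ → ℝ) (hconv : ConvexOn ℝ (Set.Ici 0) φ)
    (h0 : ContinuousWithinAt φ (Set.Ici 0) 0) : ContinuousOn φ (Set.Ici 0) := by
  intro x hx
  rcases eq_or_lt_of_le (Set.mem_Ici.mp hx) with h | h
  · exact h.symm ▸ h0
  · have hsub : ConvexOn ℝ (Set.Ioi 0) φ :=
      hconv.subset (Set.Ioi_subset_Ici le_rfl) (convex_Ioi 0)
    have hcont : ContinuousOn φ (Set.Ioi 0) := hsub.continuousOn isOpen_Ioi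
    exact ((hcont x h).continuousAt (isOpen_Ioi.mem_nhds h)).continuousWithinAt



lemma hasFDerivAt_DphiS {m k : ℕ} (φ : ℝ → ℝ) (hφC2 : ContDiffOn ℝ 2 φ (Set.Ioi (0:ℝ)))
    (S : (Fin k → ℝ) → (Fin m → ℝ)) (Θ : Set (Fin k → ℝ))
    (hSC2 : ContDiffOn ℝ 2 S (interior Θ))
    (t : Fin m → ℝ) (θ : Fin k → ℝ) (ht : ∀ i, 0 < t i) (hθ : θ ∈ interior Θ)
    (hS : ∀ i, 0 < S θ i) :
    HasFDerivAt (fun θ => DphiR φ (S θ) t)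
      (∑ i, deriv φ (S θ i / t i) • fderiv ℝ (fun θ => S θ i) θ) θ := by
  have hSd : DifferentiableAt ℝ S θ :=
    (hSC2.differentiableOn (by norm_num)).differentiableAt (isOpen_interior.mem_nhds hθ)
  have hSdi : ∀ i, DifferentiableAt ℝ (fun θ => S θ i) θ := differentiableAt_pi.mp hSd
  apply HasFDerivAt.fun_sum
  intro i _
  have hx : (0:ℝ) < S θ i / t i := div_pos (hS i) (ht i)
  have hφd : HasDerivAt φ (deriv φ (S θ i / t i)) (S θ i / t i) :=
    ((hφC2.differentiableOn (by norm_num)).differentiableAt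
      (isOpen_Ioi.mem_nhds hx)).hasDerivAt
  have hinner : HasFDerivAt (fun θ => S θ i / t i)
      ((t i)⁻¹ • fderiv ℝ (fun θ => S θ i) θ) θ := by
    simp only [div_eq_inv_mul]
    exact (hSdi i).hasFDerivAt.const_mul _
  have hcomp := (hφd.comp_hasFDerivAt θ hinner).const_mul (t i)
  have heq : t i • deriv φ (S θ i / t i) • (t i)⁻¹ • fderiv ℝ (fun θ => S θ i) θ
      = deriv φ (S θ i / t i) • fderiv ℝ (fun θ => S θ i) θ := by
    rw [smul_smul, smul_smul]
    congr 1
    rw [mul_comm (t i), mul_assoc, mul_inv_cancel₀ (ne_of_gt (ht i)), mul_one]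
  rw [heq] at hcomp
  exact hcomp


lemma contDiffOn_G {m k : ℕ} (φ : ℝ → ℝ) (hφC2 : ContDiffOn ℝ 2 φ (Set.Ioi (0:ℝ)))
    (S : (Fin k → ℝ) → (Fin m → ℝ)) (Θ : Set (Fin k → ℝ))
    (hSC2 : ContDiffOn ℝ 2 S (interior Θ))
    (hSint : ∀ θ ∈ interior Θ, ∀ i, S θ i ∈ Set.Ioo (0 : ℝ) 1) (j : Fin k) :
    ContDiffOn ℝ 1 (fun p : (Fin m → ℝ) × (Fin k → ℝ) =>
        ∑ i, fderiv ℝ (fun θ => S θ i) p.2 (Pi.single j 1) * deriv φ (S p.2 i / p.1 i))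
      {p : (Fin m → ℝ) × (Fin k → ℝ) | (∀ i, 0 < p.1 i) ∧ p.2 ∈ interior Θ} := by
  set P : Set ((Fin m → ℝ) × (Fin k → ℝ)) :=
    {p | (∀ i, 0 < p.1 i) ∧ p.2 ∈ interior Θ} with hP
  have hsnd : MapsTo (fun p : (Fin m → ℝ) × (Fin k → ℝ) => p.2) P (interior Θ) :=
    fun p hp => hp.2
  have hφ' : ContDiffOn ℝ 1 (deriv φ) (Set.Ioi (0:ℝ)) :=
    hφC2.deriv_of_isOpen isOpen_Ioi (by norm_num)
  apply ContDiffOn.sum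
  intro i _
  have hSi : ContDiffOn ℝ 2 (fun θ => S θ i) (interior Θ) :=
    (ContinuousLinearMap.proj (R := ℝ) (φ := fun _ : Fin m => ℝ) i).contDiff.comp_contDiffOn hSC2
  have hA : ContDiffOn ℝ 1 (fun θ => fderiv ℝ (fun θ' => S θ' i) θ (Pi.single j 1))
      (interior Θ) :=
    (hSi.fderiv_of_isOpen isOpen_interior (by norm_num)).clm_apply contDiffOn_const
  have hAP : ContDiffOn ℝ 1
      (fun p : (Fin m → ℝ) × (Fin k → ℝ) => fderiv ℝ (fun θ' => S θ' i) p.2 (Pi.single j 1)) P :=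
    hA.comp contDiff_snd.contDiffOn hsnd
  have hnum : ContDiffOn ℝ 1 (fun p : (Fin m → ℝ) × (Fin k → ℝ) => S p.2 i) P :=
    ((hSi.of_le (by norm_num)).comp contDiff_snd.contDiffOn hsnd)
  have hden : ContDiffOn ℝ 1 (fun p : (Fin m → ℝ) × (Fin k → ℝ) => p.1 i) P :=
    (contDiff_pi.mp contDiff_fst i).contDiffOn
  have hratio : ContDiffOn ℝ 1 (fun p : (Fin m → ℝ) × (Fin k → ℝ) => S p.2 i / p.1 i) P :=
    hnum.div hden (fun p hp => ne_of_gt (hp.1 i))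
  have hmaps : MapsTo (fun p : (Fin m → ℝ) × (Fin k → ℝ) => S p.2 i / p.1 i) P (Set.Ioi 0) :=
    fun p hp => div_pos (hSint _ hp.2 i).1 (hp.1 i)
  exact hAP.mul (hφ'.comp hratio hmaps)


lemma hasFDerivAt_G_t {m : ℕ} (φ : ℝ → ℝ) (hφC2 : ContDiffOn ℝ 2 φ (Set.Ioi (0:ℝ)))
    (a c : Fin m → ℝ) (t0 : Fin m → ℝ) (ha : ∀ i, 0 < a i) (ht0 : ∀ i, 0 < t0 i) :
    HasFDerivAt (fun t : Fin m → ℝ => ∑ i, c i * deriv φ (a i / t i))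
      (∑ i, (c i * deriv (deriv φ) (a i / t0 i) * (-(a i) / t0 i ^ 2)) •
        ContinuousLinearMap.proj (R := ℝ) (φ := fun _ : Fin m => ℝ) i) t0 := by
  have hφ' : ContDiffOn ℝ 1 (deriv φ) (Set.Ioi (0:ℝ)) :=
    hφC2.deriv_of_isOpen isOpen_Ioi (by norm_num)
  apply HasFDerivAt.fun_sum
  intro i _
  have hx : (0:ℝ) < a i / t0 i := div_pos (ha i) (ht0 i)
  have hproj : HasFDerivAt (fun t : Fin m → ℝ => t i)
      (ContinuousLinearMap.proj (R := ℝ) (φ := fun _ : Fin m => ℝ) i) t0 :=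
    (ContinuousLinearMap.proj (R := ℝ) (φ := fun _ : Fin m => ℝ) i).hasFDerivAt
  have hdivu : HasDerivAt (fun u : ℝ => a i / u) (-(a i) / t0 i ^ 2) (t0 i) := by
    have := (hasDerivAt_inv (ne_of_gt (ht0 i))).const_mul (a i)
    simp only [div_eq_mul_inv]
    refine this.congr_deriv ?_
    ring
  have hinner : HasFDerivAt (fun t : Fin m → ℝ => a i / t i)
      ((-(a i) / t0 i ^ 2) • ContinuousLinearMap.proj (R := ℝ) (φ := fun _ : Fin m => ℝ) i)
      t0 := hdivu.comp_hasFDerivAt t0 hproj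
  have hφ'd : HasDerivAt (deriv φ) (deriv (deriv φ) (a i / t0 i)) (a i / t0 i) :=
    ((hφ'.differentiableOn (by norm_num)).differentiableAt
      (isOpen_Ioi.mem_nhds hx)).hasDerivAt
  have hcomp := (hφ'd.comp_hasFDerivAt t0 hinner).const_mul (c i)
  have heq : c i • deriv (deriv φ) (a i / t0 i) • (-(a i) / t0 i ^ 2) •
        ContinuousLinearMap.proj (R := ℝ) (φ := fun _ : Fin m => ℝ) i
      = (c i * deriv (deriv φ) (a i / t0 i) * (-(a i) / t0 i ^ 2)) •
        ContinuousLinearMap.proj (R := ℝ) (φ := fun _ : Fin m => ℝ) i := by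
    rw [smul_smul, smul_smul, mul_assoc]
  rw [heq] at hcomp
  exact hcomp




lemma contOn_Dphi {m k : ℕ} (φ : ℝ → ℝ) (hφcont : ContinuousOn φ (Set.Ici 0))
    (S : (Fin k → ℝ) → (Fin m → ℝ)) (Θ : Set (Fin k → ℝ))
    (hScont : ContinuousOn S (closure Θ))
    (hSrange : ∀ θ ∈ closure Θ, ∀ i, S θ i ∈ Set.Icc (0 : ℝ) 1) :
    ContinuousOn (fun p : (Fin m → ℝ) × (Fin k → ℝ) => DphiR φ (S p.2) p.1)
      {p : (Fin m → ℝ) × (Fin k → ℝ) | (∀ i, 0 < p.1 i) ∧ p.2 ∈ closure Θ} := by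
  set Q : Set ((Fin m → ℝ) × (Fin k → ℝ)) := {p | (∀ i, 0 < p.1 i) ∧ p.2 ∈ closure Θ}
  apply continuousOn_finset_sum
  intro i _
  have hti : ContinuousOn (fun p : (Fin m → ℝ) × (Fin k → ℝ) => p.1 i) Q :=
    (continuous_apply i).comp_continuousOn continuous_fst.continuousOn
  have hSi : ContinuousOn (fun p : (Fin m → ℝ) × (Fin k → ℝ) => S p.2 i) Q :=
    (continuous_apply i).comp_continuousOn
      (hScont.comp continuous_snd.continuousOn (fun p hp => hp.2))
  have hratio : ContinuousOn (fun p : (Fin m → ℝ) × (Fin k → ℝ) => S p.2 i / p.1 i) Q :=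
    hSi.div hti (fun p hp => ne_of_gt (hp.1 i))
  refine hti.mul (hφcont.comp hratio ?_)
  intro p hp
  exact div_nonneg (hSrange _ hp.2 i).1 (le_of_lt (hp.1 i))

set_option maxHeartbeats 1000000 in
lemma argmin_tendsto {m k : ℕ} (φ : ℝ → ℝ) (hφcont : ContinuousOn φ (Set.Ici 0))
    (Θ : Set (Fin k → ℝ)) (hΘbd : Bornology.IsBounded Θ)
    (S : (Fin k → ℝ) → (Fin m → ℝ))
    (hScont : ContinuousOn S (closure Θ))
    (hSinj : Set.InjOn S (closure Θ))
    (hSrange : ∀ θ ∈ closure Θ, ∀ i, S θ i ∈ Set.Icc (0 : ℝ) 1)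
    (t0 : Fin m → ℝ)
    (N : Set (Fin m → ℝ)) (hNopen : IsOpen N) (ht0N : t0 ∈ N)
    (hNsub : ∀ t ∈ N, ∀ i, t i ∈ Set.Ioo (0 : ℝ) 1)
    (ϑ : (Fin m → ℝ) → (Fin k → ℝ))
    (hϑ : ∀ t ∈ N, ϑ t ∈ interior Θ ∧
      ∀ s, IsPhiProjR φ (S '' closure Θ) t s ↔ s = S (ϑ t)) :
    Tendsto ϑ (𝓝 t0) (𝓝 (ϑ t0)) := by
  classical
  set θ0 := ϑ t0 with hθ0def
  have hθ0int : θ0 ∈ interior Θ := (hϑ t0 ht0N).1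
  have hθ0cl : θ0 ∈ closure Θ := interior_subset.trans subset_closure hθ0int
  -- projection property
  have hproj : ∀ t ∈ N, ∀ θ' ∈ closure Θ,
      DphiR φ (S (ϑ t)) t ≤ DphiR φ (S θ') t := by
    intro t ht θ' hθ'
    have h := ((hϑ t ht).2 (S (ϑ t))).mpr rfl
    exact h.2 _ ⟨θ', hθ', rfl⟩
  have hcomp : IsCompact (closure Θ) := hΘbd.isCompact_closure
  have hFj := contOn_Dphi φ hφcont S Θ hScont hSrange
  set Q : Set ((Fin m → ℝ) × (Fin k → ℝ)) := {p | (∀ i, 0 < p.1 i) ∧ p.2 ∈ closure Θ}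
    with hQdef
  by_contra hnot
  rw [Metric.tendsto_nhds_nhds] at hnot
  push_neg at hnot
  obtain ⟨ε, hε, hseq⟩ := hnot
  obtain ⟨r, hr, hball⟩ := Metric.isOpen_iff.mp hNopen t0 ht0N
  have hx : ∀ n : ℕ, ∃ x, dist x t0 < min r (1 / (n + 1)) ∧ ε ≤ dist (ϑ x) θ0 := by
    intro n
    obtain ⟨x, hx1, hx2⟩ := hseq (min r (1 / (n + 1)))
      (lt_min hr (by positivity))
    exact ⟨x, hx1, hx2⟩
  choose x hx1 hx2 using hx
  have hxN : ∀ n, x n ∈ N := fun n => hball (lt_of_lt_of_le (hx1 n) (min_le_left _ _))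
  have hxlim : Tendsto x atTop (𝓝 t0) := by
    rw [tendsto_iff_dist_tendsto_zero]
    apply squeeze_zero (fun n => dist_nonneg)
      (fun n => le_of_lt (lt_of_lt_of_le (hx1 n) (min_le_right _ _)))
    exact tendsto_one_div_add_atTop_nhds_zero_nat
  have hθn : ∀ n, ϑ (x n) ∈ closure Θ :=
    fun n => interior_subset.trans subset_closure (hϑ (x n) (hxN n)).1
  obtain ⟨θbar, hθbar, g, hg, hglim⟩ := hcomp.tendsto_subseq hθn
  -- the two limits
  have hQmem : (t0, θbar) ∈ Q := ⟨fun i => (hNsub t0 ht0N i).1, hθbar⟩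
  have hQmem0 : (t0, θ0) ∈ Q := ⟨fun i => (hNsub t0 ht0N i).1, hθ0cl⟩
  have hseq1 : Tendsto (fun n => ((x (g n)), ϑ (x (g n)))) atTop (𝓝[Q] (t0, θbar)) := by
    apply tendsto_nhdsWithin_of_tendsto_nhds_of_eventually_within
    · exact (hxlim.comp hg.tendsto_atTop).prodMk_nhds hglim
    · exact Eventually.of_forall fun n => ⟨fun i => (hNsub _ (hxN (g n)) i).1, hθn (g n)⟩
  have hseq2 : Tendsto (fun n => ((x (g n)), θ0)) atTop (𝓝[Q] (t0, θ0)) := by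
    apply tendsto_nhdsWithin_of_tendsto_nhds_of_eventually_within
    · exact (hxlim.comp hg.tendsto_atTop).prodMk_nhds tendsto_const_nhds
    · exact Eventually.of_forall fun n => ⟨fun i => (hNsub _ (hxN (g n)) i).1, hθ0cl⟩
  have hlim1 : Tendsto (fun n => DphiR φ (S (ϑ (x (g n)))) (x (g n))) atTop
      (𝓝 (DphiR φ (S θbar) t0)) := (hFj _ hQmem).tendsto.comp hseq1
  have hlim2 : Tendsto (fun n => DphiR φ (S θ0) (x (g n))) atTop
      (𝓝 (DphiR φ (S θ0) t0)) := (hFj _ hQmem0).tendsto.comp hseq2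
  have hle : DphiR φ (S θbar) t0 ≤ DphiR φ (S θ0) t0 :=
    le_of_tendsto_of_tendsto' hlim1 hlim2
      (fun n => hproj _ (hxN (g n)) θ0 hθ0cl)
  -- S θbar is a φ-projection of t0
  have hprojbar : IsPhiProjR φ (S '' closure Θ) t0 (S θbar) := by
    refine ⟨⟨θbar, hθbar, rfl⟩, ?_⟩
    rintro s ⟨θ', hθ', rfl⟩
    exact hle.trans (hproj t0 ht0N θ' hθ')
  have : S θbar = S θ0 := ((hϑ t0 ht0N).2 _).mp hprojbar
  have hbar0 : θbar = θ0 := hSinj hθbar hθ0cl this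
  -- contradiction
  have hdlim : Tendsto (fun n => dist (ϑ (x (g n))) θ0) atTop (𝓝 0) := by
    rw [← hbar0]
    exact tendsto_iff_dist_tendsto_zero.mp hglim
  have : ε ≤ (0:ℝ) := le_of_tendsto_of_tendsto' tendsto_const_nhds hdlim
    (fun n => hx2 (g n))
  linarith


lemma sum_smul_proj_apply {m : ℕ} (b : Fin m → ℝ) (i : Fin m) :
    (∑ i', b i' • ContinuousLinearMap.proj (R := ℝ) (φ := fun _ : Fin m => ℝ) i')
      (Pi.single i 1) = b i := by
  simp [ContinuousLinearMap.sum_apply, ContinuousLinearMap.proj_apply, Pi.single_apply]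

lemma clm_apply_eq_sum {k : ℕ} (T : (Fin k → ℝ) →L[ℝ] ℝ) (w : Fin k → ℝ) :
    T w = ∑ l, w l * T (Pi.single l 1) := by
  conv_lhs => rw [← Finset.univ_sum_single w]
  rw [map_sum]
  refine Finset.sum_congr rfl fun l _ => ?_
  have h1 : Pi.single l (w l) = w l • (Pi.single l 1 : Fin k → ℝ) := by
    ext j
    rcases eq_or_ne j l with rfl | hj
    · simp
    · simp [Pi.single_apply, hj]
  rw [h1, _root_.map_smul, smul_eq_mul]

lemma sum_smul_clm_apply {k m : ℕ} (c : Fin m → ℝ) (L : Fin m → ((Fin k → ℝ) →L[ℝ] ℝ))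
    (v : Fin k → ℝ) : (∑ i, c i • L i) v = ∑ i, c i * L i v := by
  simp [ContinuousLinearMap.sum_apply]

lemma fderiv_comp_proj {a b : ℕ} (f : (Fin a → ℝ) → (Fin b → ℝ)) (x : Fin a → ℝ)
    (hf : DifferentiableAt ℝ f x) (l : Fin b) (v : Fin a → ℝ) :
    fderiv ℝ (fun y => f y l) x v = (fderiv ℝ f x v) l := by
  have h := ((ContinuousLinearMap.proj (R := ℝ) (φ := fun _ : Fin b => ℝ) l).hasFDerivAt.comp
    x hf.hasFDerivAt).fderiv
  have : (fun y => f y l) = ⇑(ContinuousLinearMap.proj (R := ℝ) (φ := fun _ : Fin b => ℝ) l) ∘ f := rfl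
  rw [this, h]
  rfl


set_option maxHeartbeats 1000000 in
/-- under the framework assumptions, if on an open neighborhood
`N ⊆ (0,1)^m` of `t0` the `φ`-projection on `M = S(cl Θ)` exists, is unique and is
of the form `S(θ)` with `θ ∈ int Θ` (so `ϑ*` maps `N` into `int Θ`), and if the
Hessian `H0` of `θ ↦ D_φ(S(θ)∣t0)` at `ϑ*(t0)` is positive definite, then `ϑ*` is
continuously differentiable near `t0` with Jacobian
`J[ϑ*](t0) = H0⁻¹ · J[S](ϑ*(t0))ᵀ · Δ(t0)`,
`Δ(t0) = diag((S_i(ϑ*(t0))/t_{0,i}²) φ''(S_i(ϑ*(t0))/t_{0,i}))`. -/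
theorem statement11 (m k : ℕ) (hm : 1 ≤ m) (hk : 1 ≤ k) (hkm : k ≤ m)
    (φ : ℝ → ℝ)
    (hφconv : ConvexOn ℝ (Set.Ici 0) φ)
    (hφ0 : ContinuousWithinAt φ (Set.Ici 0) 0)
    (hφsc : StrictConvexOn ℝ (Set.Ici (0 : ℝ)) φ)
    (hφC2 : ContDiffOn ℝ 2 φ (Set.Ioi (0 : ℝ)))
    (Θ : Set (Fin k → ℝ)) (hΘbd : Bornology.IsBounded Θ)
    (hΘint : (interior Θ).Nonempty)
    (S : (Fin k → ℝ) → (Fin m → ℝ))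
    (hScont : ContinuousOn S (closure Θ))
    (hSinj : Set.InjOn S (closure Θ))
    (hSC2 : ContDiffOn ℝ 2 S (interior Θ))
    (hSrange : ∀ θ ∈ closure Θ, ∀ i, S θ i ∈ Set.Icc (0 : ℝ) 1)
    (hSint : ∀ θ ∈ interior Θ, ∀ i, S θ i ∈ Set.Ioo (0 : ℝ) 1)
    (t0 : Fin m → ℝ) (ht0 : ∀ i, t0 i ∈ Set.Ioo (0 : ℝ) 1)
    (N : Set (Fin m → ℝ)) (hNopen : IsOpen N) (ht0N : t0 ∈ N)
    (hNsub : ∀ t ∈ N, ∀ i, t i ∈ Set.Ioo (0 : ℝ) 1)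
    (ϑ : (Fin m → ℝ) → (Fin k → ℝ))
    (hϑ : ∀ t ∈ N, ϑ t ∈ interior Θ ∧
      ∀ s, IsPhiProjR φ (S '' closure Θ) t s ↔ s = S (ϑ t))
    (hH0 : (hessMatrix (fun θ => DphiR φ (S θ) t0) (ϑ t0)).PosDef) :
    ∃ U : Set (Fin m → ℝ), IsOpen U ∧ t0 ∈ U ∧ U ⊆ N ∧
      ContDiffOn ℝ 1 ϑ U ∧
      jacMatrix ϑ t0 =
        (hessMatrix (fun θ => DphiR φ (S θ) t0) (ϑ t0))⁻¹ *
          (jacMatrix S (ϑ t0))ᵀ *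
          Matrix.diagonal
            (fun i => S (ϑ t0) i / (t0 i) ^ 2 * deriv (deriv φ) (S (ϑ t0) i / t0 i)) := by
  classical
  have ht0pos : ∀ i, 0 < t0 i := fun i => (ht0 i).1
  set θ0 := ϑ t0 with hθ0def
  have hθ0int : θ0 ∈ interior Θ := (hϑ t0 ht0N).1
  have hθ0cl : θ0 ∈ closure Θ := interior_subset.trans subset_closure hθ0int
  have hSθ0pos : ∀ i, 0 < S θ0 i := fun i => (hSint _ hθ0int i).1
  set G : (Fin m → ℝ) × (Fin k → ℝ) → (Fin k → ℝ) := fun p j =>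
    ∑ i, fderiv ℝ (fun θ => S θ i) p.2 (Pi.single j 1) * deriv φ (S p.2 i / p.1 i)
    with hGdef
  set P : Set ((Fin m → ℝ) × (Fin k → ℝ)) := {p | (∀ i, 0 < p.1 i) ∧ p.2 ∈ interior Θ}
    with hPdef
  -- Step A : gradient vanishes along the projection curve
  have hgrad0 : ∀ t ∈ N, G (t, ϑ t) = 0 := by
    intro t ht
    have htpos : ∀ i, 0 < t i := fun i => (hNsub t ht i).1
    have hϑt : ϑ t ∈ interior Θ := (hϑ t ht).1
    have hd := hasFDerivAt_DphiS φ hφC2 S Θ hSC2 t (ϑ t) htpos hϑt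
      (fun i => (hSint _ hϑt i).1)
    have hmin : IsLocalMin (fun θ => DphiR φ (S θ) t) (ϑ t) := by
      have hproj := ((hϑ t ht).2 (S (ϑ t))).mpr rfl
      filter_upwards [isOpen_interior.mem_nhds hϑt] with θ hθ
      exact hproj.2 _ ⟨θ, interior_subset.trans subset_closure hθ, rfl⟩
    have hL0 := hmin.hasFDerivAt_eq_zero hd
    funext j
    have hval := congrArg (fun L : (Fin k → ℝ) →L[ℝ] ℝ => L (Pi.single j 1)) hL0
    simp only [ContinuousLinearMap.zero_apply] at hval
    rw [sum_smul_clm_apply] at hval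
    show (∑ i, fderiv ℝ (fun θ => S θ i) (ϑ t) (Pi.single j 1)
      * deriv φ (S (ϑ t) i / t i)) = (0 : Fin k → ℝ) j
    rw [Pi.zero_apply, ← hval]
    exact Finset.sum_congr rfl fun i _ => mul_comm _ _
  -- Step B : identification of the Hessian entries
  have hfdG : ∀ θ ∈ interior Θ, ∀ j,
      fderiv ℝ (fun θ => DphiR φ (S θ) t0) θ (Pi.single j 1) = G (t0, θ) j := by
    intro θ hθ j
    have hd := hasFDerivAt_DphiS φ hφC2 S Θ hSC2 t0 θ ht0pos hθ
      (fun i => (hSint _ hθ i).1)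
    rw [hd.fderiv, sum_smul_clm_apply]
    exact Finset.sum_congr rfl fun i _ => mul_comm _ _
  have hhess : ∀ l j, hessMatrix (fun θ => DphiR φ (S θ) t0) θ0 l j
      = fderiv ℝ (fun θ => G (t0, θ) j) θ0 (Pi.single l 1) := by
    intro l j
    have hev : (fun θ => fderiv ℝ (fun θ' => DphiR φ (S θ') t0) θ (Pi.single j 1))
        =ᶠ[𝓝 θ0] fun θ => G (t0, θ) j := by
      filter_upwards [isOpen_interior.mem_nhds hθ0int] with θ hθ
      exact hfdG θ hθ j
    show fderiv ℝ (fun θ => fderiv ℝ (fun θ' => DphiR φ (S θ') t0) θ (Pi.single j 1))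
        θ0 (Pi.single l 1) = _
    rw [hev.fderiv_eq]
  -- Step C : joint smoothness of G
  have hPopen : IsOpen P := by
    have h1 : IsOpen {t : Fin m → ℝ | ∀ i, 0 < t i} := by
      have he : {t : Fin m → ℝ | ∀ i, 0 < t i}
          = ⋂ i, (fun t : Fin m → ℝ => t i) ⁻¹' Set.Ioi 0 := by
        ext t; simp [Set.mem_iInter, Set.mem_Ioi]
      rw [he]
      exact isOpen_iInter_of_finite fun i =>
        (continuous_apply i).isOpen_preimage _ isOpen_Ioi
    have he2 : P = (Prod.fst ⁻¹' {t : Fin m → ℝ | ∀ i, 0 < t i})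
        ∩ (Prod.snd ⁻¹' interior Θ) := rfl
    rw [he2]
    exact (h1.preimage continuous_fst).inter (isOpen_interior.preimage continuous_snd)
  have hPmem : ((t0, θ0) : (Fin m → ℝ) × (Fin k → ℝ)) ∈ P := ⟨ht0pos, hθ0int⟩
  have hGj : ∀ j, ContDiffAt ℝ 1 (fun p => G p j) (t0, θ0) := fun j =>
    (contDiffOn_G φ hφC2 S Θ hSC2 hSint j).contDiffAt (hPopen.mem_nhds hPmem)
  have hGsm : ContDiffAt ℝ 1 G (t0, θ0) := contDiffAt_pi.mpr hGj
  have hGdiff : DifferentiableAt ℝ G (t0, θ0) := hGsm.differentiableAt one_ne_zero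
  -- Step D : explicit t-partials
  have hGt : ∀ j, HasFDerivAt (fun t => G (t, θ0) j)
      (∑ i, (fderiv ℝ (fun θ => S θ i) θ0 (Pi.single j 1)
          * deriv (deriv φ) (S θ0 i / t0 i) * (-(S θ0 i) / t0 i ^ 2)) •
        ContinuousLinearMap.proj (R := ℝ) (φ := fun _ : Fin m => ℝ) i) t0 := fun j =>
    hasFDerivAt_G_t φ hφC2 (fun i => S θ0 i)
      (fun i => fderiv ℝ (fun θ => S θ i) θ0 (Pi.single j 1)) t0 hSθ0pos ht0pos
  -- Step E : the full derivative of G and its partial evaluations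
  set DG := fderiv ℝ G (t0, θ0) with hDGdef
  have hDgj : ∀ j, HasFDerivAt (fun p => G p j)
      ((ContinuousLinearMap.proj (R := ℝ) (φ := fun _ : Fin k => ℝ) j).comp DG)
      (t0, θ0) := fun j =>
    (ContinuousLinearMap.proj (R := ℝ) (φ := fun _ : Fin k => ℝ) j).hasFDerivAt.comp
      _ hGdiff.hasFDerivAt
  have hptheta : ∀ j (v : Fin k → ℝ),
      fderiv ℝ (fun θ => G (t0, θ) j) θ0 v = DG (0, v) j := by
    intro j v
    have hinner : HasFDerivAt (fun θ : Fin k → ℝ => ((t0, θ) : (Fin m → ℝ) × (Fin k → ℝ)))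
        ((0 : (Fin k → ℝ) →L[ℝ] (Fin m → ℝ)).prod (ContinuousLinearMap.id ℝ (Fin k → ℝ)))
        θ0 := (hasFDerivAt_const t0 θ0).prodMk (hasFDerivAt_id θ0)
    have hcomp' : HasFDerivAt (fun θ => G (t0, θ) j)
        (((ContinuousLinearMap.proj (R := ℝ) (φ := fun _ : Fin k => ℝ) j).comp DG).comp
          ((0 : (Fin k → ℝ) →L[ℝ] (Fin m → ℝ)).prod (ContinuousLinearMap.id ℝ (Fin k → ℝ))))
        θ0 := (hDgj j).comp θ0 hinner
    rw [hcomp'.fderiv]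
    rfl
  have hpt : ∀ j (v : Fin m → ℝ),
      fderiv ℝ (fun t => G (t, θ0) j) t0 v = DG (v, 0) j := by
    intro j v
    have hinner : HasFDerivAt (fun t : Fin m → ℝ => ((t, θ0) : (Fin m → ℝ) × (Fin k → ℝ)))
        ((ContinuousLinearMap.id ℝ (Fin m → ℝ)).prod (0 : (Fin m → ℝ) →L[ℝ] (Fin k → ℝ)))
        t0 := (hasFDerivAt_id t0).prodMk (hasFDerivAt_const θ0 t0)
    have hcomp' : HasFDerivAt (fun t => G (t, θ0) j)
        (((ContinuousLinearMap.proj (R := ℝ) (φ := fun _ : Fin k => ℝ) j).comp DG).comp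
          ((ContinuousLinearMap.id ℝ (Fin m → ℝ)).prod (0 : (Fin m → ℝ) →L[ℝ] (Fin k → ℝ))))
        t0 := HasFDerivAt.comp (g := fun p => G p j) t0 (hDgj j) hinner
    rw [hcomp'.fderiv]
    rfl
  have hDGsplit : ∀ (v : Fin m → ℝ) (w : Fin k → ℝ) j,
      DG (v, w) j = DG (v, 0) j + DG (0, w) j := by
    intro v w j
    have hvw : ((v, w) : (Fin m → ℝ) × (Fin k → ℝ)) = (v, 0) + (0, w) := by
      simp [Prod.ext_iff]
    rw [hvw, map_add]
    rfl
  -- value of the t-partial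
  have hBval : ∀ j i, DG (Pi.single i 1, 0) j
      = fderiv ℝ (fun θ => S θ i) θ0 (Pi.single j 1)
        * deriv (deriv φ) (S θ0 i / t0 i) * (-(S θ0 i) / t0 i ^ 2) := by
    intro j i
    rw [← hpt j (Pi.single i 1), (hGt j).fderiv]
    exact sum_smul_proj_apply _ i
  -- H-matrix action
  have hHval : ∀ j (w : Fin k → ℝ), DG (0, w) j
      = ∑ l, w l * hessMatrix (fun θ => DphiR φ (S θ) t0) θ0 l j := by
    intro j w
    rw [← hptheta j w, clm_apply_eq_sum]
    exact Finset.sum_congr rfl fun l _ => by rw [hhess l j]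
  have hHsymm : ∀ l j, hessMatrix (fun θ => DphiR φ (S θ) t0) θ0 l j
      = hessMatrix (fun θ => DphiR φ (S θ) t0) θ0 j l := by
    intro l j
    have := hH0.1.apply j l
    rwa [star_trivial] at this
  -- Step G : invertibility of the derivative of Φ
  have hker : ∀ x : (Fin m → ℝ) × (Fin k → ℝ),
      ((ContinuousLinearMap.fst ℝ (Fin m → ℝ) (Fin k → ℝ)).prod DG) x = 0 → x = 0 := by
    intro x hx
    obtain ⟨v, w⟩ := x
    have h1 : v = 0 := congrArg Prod.fst hx
    have h2 : DG (v, w) = 0 := congrArg Prod.snd hx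
    subst h1
    by_contra hw0
    have hwne : w ≠ 0 := by
      intro h
      exact hw0 (by rw [h]; rfl)
    have hpos := hH0.dotProduct_mulVec_pos hwne
    have hmv : (hessMatrix (fun θ => DphiR φ (S θ) t0) θ0) *ᵥ w = 0 := by
      funext j
      have hj : DG ((0 : Fin m → ℝ), w) j = 0 := by rw [h2]; rfl
      rw [hHval j w] at hj
      show ∑ l, hessMatrix (fun θ => DphiR φ (S θ) t0) θ0 j l * w l = (0 : Fin k → ℝ) j
      rw [Pi.zero_apply, ← hj]
      exact Finset.sum_congr rfl fun l _ => by rw [hHsymm j l, mul_comm]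
    rw [hmv] at hpos
    simp at hpos
  have hinj : Function.Injective
      ⇑((ContinuousLinearMap.fst ℝ (Fin m → ℝ) (Fin k → ℝ)).prod DG) := by
    intro x y hxy
    have := hker (x - y) (by rw [map_sub, hxy, sub_self])
    exact sub_eq_zero.mp this
  set L := (ContinuousLinearMap.fst ℝ (Fin m → ℝ) (Fin k → ℝ)).prod DG with hLdef
  let eqv : ((Fin m → ℝ) × (Fin k → ℝ)) ≃L[ℝ] ((Fin m → ℝ) × (Fin k → ℝ)) :=
    (LinearEquiv.ofInjectiveEndo (↑L : ((Fin m → ℝ) × (Fin k → ℝ)) →ₗ[ℝ] _)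
      hinj).toContinuousLinearEquiv
  have heqv : (eqv : ((Fin m → ℝ) × (Fin k → ℝ)) →L[ℝ] _) = L :=
    ContinuousLinearMap.ext fun x => rfl
  set Φ : (Fin m → ℝ) × (Fin k → ℝ) → (Fin m → ℝ) × (Fin k → ℝ) :=
    fun p => (p.1, G p) with hΦdef
  have hΦd : HasFDerivAt Φ
      ((eqv : ((Fin m → ℝ) × (Fin k → ℝ)) →L[ℝ] ((Fin m → ℝ) × (Fin k → ℝ))))
      (t0, θ0) := by
    rw [heqv]
    exact (hasFDerivAt_fst).prodMk hGdiff.hasFDerivAt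
  have hΦsm : ContDiffAt ℝ 1 Φ (t0, θ0) := contDiffAt_fst.prodMk hGsm
  have hΦval : Φ (t0, θ0) = (t0, (0 : Fin k → ℝ)) := by
    have := hgrad0 t0 ht0N
    rw [hΦdef]
    simp only
    rw [← hθ0def] at this
    rw [this]
  set inv := hΦsm.localInverse hΦd one_ne_zero with hinvdef
  have hinvsm : ContDiffAt ℝ 1 inv (Φ (t0, θ0)) := hΦsm.to_localInverse hΦd one_ne_zero
  have hleft : ∀ᶠ p in 𝓝 ((t0, θ0) : (Fin m → ℝ) × (Fin k → ℝ)), inv (Φ p) = p :=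
    (hΦsm.hasStrictFDerivAt' hΦd one_ne_zero).eventually_left_inverse
  set ψ : (Fin m → ℝ) → (Fin k → ℝ) := fun t => (inv (t, 0)).2 with hψdef
  have hψsm : ContDiffAt ℝ 1 ψ t0 := by
    have h1 : ContDiffAt ℝ 1 inv (t0, (0 : Fin k → ℝ)) := by rwa [hΦval] at hinvsm
    have h2 : ContDiffAt ℝ 1
        (fun t : Fin m → ℝ => ((t, (0 : Fin k → ℝ)) : (Fin m → ℝ) × (Fin k → ℝ))) t0 :=
      contDiffAt_id.prodMk contDiffAt_const
    exact contDiffAt_snd.comp t0 (h1.comp t0 h2)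
  -- Step H : matching ϑ with ψ near t0
  have hφcont : ContinuousOn φ (Set.Ici 0) := phiContOnIci φ hφconv hφ0
  have htendϑ : Tendsto ϑ (𝓝 t0) (𝓝 θ0) :=
    argmin_tendsto φ hφcont Θ hΘbd S hScont hSinj hSrange t0 N hNopen ht0N hNsub ϑ hϑ
  have hmatch : ∀ᶠ t in 𝓝 t0, ϑ t = ψ t := by
    have htend2 : Tendsto (fun t => ((t, ϑ t) : (Fin m → ℝ) × (Fin k → ℝ)))
        (𝓝 t0) (𝓝 (t0, θ0)) := tendsto_id.prodMk_nhds htendϑ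
    filter_upwards [htend2.eventually hleft, hNopen.mem_nhds ht0N] with t h1 h2
    have hΦt : Φ (t, ϑ t) = (t, (0 : Fin k → ℝ)) := by
      rw [hΦdef]; simp only; rw [hgrad0 t h2]
    rw [hΦt] at h1
    exact (congrArg Prod.snd h1).symm
  -- Step I : construct U
  obtain ⟨u, hu, hψOn⟩ := hψsm.contDiffOn le_rfl (by norm_num)
  have hmemU : u ∩ N ∩ {t | ϑ t = ψ t} ∈ 𝓝 t0 :=
    inter_mem (inter_mem hu (hNopen.mem_nhds ht0N)) hmatch
  refine ⟨interior (u ∩ N ∩ {t | ϑ t = ψ t}), isOpen_interior,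
    mem_interior_iff_mem_nhds.mpr hmemU, ?_, ?_, ?_⟩
  · exact interior_subset.trans fun t ht => ht.1.2
  · refine (hψOn.mono (interior_subset.trans fun t ht => ht.1.1)).congr ?_
    intro t ht
    exact (interior_subset ht).2
  -- Step J : the Jacobian formula
  · have hϑdiff : DifferentiableAt ℝ ϑ t0 :=
      (Filter.EventuallyEq.differentiableAt_iff hmatch).mpr (hψsm.differentiableAt one_ne_zero)
    set Dϑ := fderiv ℝ ϑ t0 with hDϑdef
    have hrel : ∀ j i, (0 : ℝ) = DG (Pi.single i 1, 0) j
        + ∑ l, Dϑ (Pi.single i 1) l * hessMatrix (fun θ => DphiR φ (S θ) t0) θ0 l j := by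
      intro j i
      have hinner : HasFDerivAt
          (fun t : Fin m → ℝ => ((t, ϑ t) : (Fin m → ℝ) × (Fin k → ℝ)))
          ((ContinuousLinearMap.id ℝ (Fin m → ℝ)).prod Dϑ) t0 :=
        (hasFDerivAt_id t0).prodMk hϑdiff.hasFDerivAt
      have hchain : HasFDerivAt (fun t => G (t, ϑ t) j)
          (((ContinuousLinearMap.proj (R := ℝ) (φ := fun _ : Fin k => ℝ) j).comp DG).comp
            ((ContinuousLinearMap.id ℝ (Fin m → ℝ)).prod Dϑ)) t0 :=
        HasFDerivAt.comp (g := fun p => G p j) t0 (hDgj j) hinner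
      have hzero : fderiv ℝ (fun t => G (t, ϑ t) j) t0 = 0 := by
        have hev : (fun t => G (t, ϑ t) j) =ᶠ[𝓝 t0] fun _ => (0 : ℝ) := by
          filter_upwards [hNopen.mem_nhds ht0N] with t ht
          rw [hgrad0 t ht]; rfl
        rw [hev.fderiv_eq]
        exact fderiv_const_apply 0
      have hcf := hchain.fderiv
      rw [hzero] at hcf
      have hv := congrArg
        (fun T : (Fin m → ℝ) →L[ℝ] ℝ => T (Pi.single i 1)) hcf.symm
      simp only [ContinuousLinearMap.zero_apply] at hv
      have hv' : (0 : ℝ) = DG (Pi.single i 1, Dϑ (Pi.single i 1)) j := hv.symm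
      rw [hDGsplit, hHval] at hv'
      exact hv'
    have hJ : ∀ l i, jacMatrix ϑ t0 l i = Dϑ (Pi.single i 1) l := by
      intro l i
      exact fderiv_comp_proj ϑ t0 hϑdiff l (Pi.single i 1)
    have hHJ : hessMatrix (fun θ => DphiR φ (S θ) t0) θ0 * jacMatrix ϑ t0
        = (jacMatrix S θ0)ᵀ * Matrix.diagonal
            (fun i => S θ0 i / (t0 i) ^ 2 * deriv (deriv φ) (S θ0 i / t0 i)) := by
      ext j i
      rw [Matrix.mul_apply, Matrix.mul_diagonal, Matrix.transpose_apply]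
      have h1 : ∑ l, hessMatrix (fun θ => DphiR φ (S θ) t0) θ0 j l * jacMatrix ϑ t0 l i
          = ∑ l, Dϑ (Pi.single i 1) l * hessMatrix (fun θ => DphiR φ (S θ) t0) θ0 l j := by
        refine Finset.sum_congr rfl fun l _ => ?_
        rw [hJ l i, hHsymm j l, mul_comm]
      rw [h1, ← neg_eq_of_add_eq_zero_right (hrel j i).symm, hBval j i]
      show -(fderiv ℝ (fun θ => S θ i) θ0 (Pi.single j 1)
        * deriv (deriv φ) (S θ0 i / t0 i) * (-(S θ0 i) / t0 i ^ 2))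
        = jacMatrix S θ0 i j * (S θ0 i / (t0 i) ^ 2 * deriv (deriv φ) (S θ0 i / t0 i))
      have hjs : jacMatrix S θ0 i j = fderiv ℝ (fun θ => S θ i) θ0 (Pi.single j 1) := rfl
      rw [hjs]
      ring
    have hdet : IsUnit (hessMatrix (fun θ => DphiR φ (S θ) t0) θ0).det :=
      hH0.det_pos.ne'.isUnit
    haveI := (hessMatrix (fun θ => DphiR φ (S θ) t0) θ0).invertibleOfIsUnitDet hdet
    calc jacMatrix ϑ t0
        = (hessMatrix (fun θ => DphiR φ (S θ) t0) θ0)⁻¹ *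
          ((hessMatrix (fun θ => DphiR φ (S θ) t0) θ0) * jacMatrix ϑ t0) :=
        (Matrix.inv_mul_cancel_left_of_invertible _ _).symm
      _ = (hessMatrix (fun θ => DphiR φ (S θ) t0) θ0)⁻¹ *
          ((jacMatrix S θ0)ᵀ * Matrix.diagonal
            (fun i => S θ0 i / (t0 i) ^ 2 * deriv (deriv φ) (S θ0 i / t0 i))) := by
        rw [hHJ]
      _ = _ := by rw [← Matrix.mul_assoc]
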